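/- Let G = (V⁺, V⁻; E) be a simple bipartite graph with edge weights w : E → ℝ, let μ be a minimum-weight perfect matching in (G, w), let s ∈ V⁺ be a vertex with δ_G(s) = {s} × V⁻, and let w̃ : E → ℝ be new weights satisfying w̃(e) = w(e) for every edge e ∈ E ∖ δ_G(s). Let e' = (s, t) be the edge of μ incident to s, let μ' = μ ∖ {e'}, and let P_t be a shortest directed path from s to t in the auxiliary weighted graph (G_{μ'}, w̃_{μ'}). Then μ' △ P_t (the matching obtained from μ' by exchanging matching and non-matching edges along P_t) is a minimum-weight perfect matching in (G, w̃). -/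

import Mathlib

/-!  Common setup: weighted bipartite graphs `G = (V⁺, V⁻; E)` with `V⁺ = α`, `V⁻ = β`,
edges directed from `V⁺` to `V⁻`, auxiliary graphs of matchings, walks and cycles. -/

variable {α β : Type*}

/-- Directed adjacency of the auxiliary graph `G_μ`: non-matching edges go from `V⁺` to `V⁻`,
matching edges are reversed. -/
def auxAdj (E μ : Finset (α × β)) : α ⊕ β → α ⊕ β → Prop
  | Sum.inl u, Sum.inr v => (u, v) ∈ E ∧ (u, v) ∉ μ
  | Sum.inr v, Sum.inl u => (u, v) ∈ μ
  | _, _ => False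

/-- The auxiliary weight `w_μ`, as a function on pairs of vertices. -/
def auxW (w : α × β → ℝ) : α ⊕ β → α ⊕ β → ℝ
  | Sum.inl u, Sum.inr v => w (u, v)
  | Sum.inr v, Sum.inl u => - w (u, v)
  | _, _ => 0

/-- Weight of a walk, given by its list of vertices. -/
def walkWeight {V : Type*} (W : V → V → ℝ) (l : List V) : ℝ :=
  ((l.zip l.tail).map fun p => W p.1 p.2).sum

/-- A (simple) directed path from `s` to `t`, given by its list of vertices. -/
def IsDiPath {V : Type*} (adj : V → V → Prop) (s t : V) (l : List V) : Prop :=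
  l.head? = some s ∧ l.getLast? = some t ∧ l.Chain' adj ∧ l.Nodup

/-- A (simple) directed cycle, given by the list of its vertices (the closing edge
from the last vertex back to the first is implicit). -/
def IsDiCycle {V : Type*} (adj : V → V → Prop) (l : List V) : Prop :=
  l ≠ [] ∧ l.Nodup ∧ (l ++ l.take 1).Chain' adj

/-- Total auxiliary weight of a directed cycle (including the closing edge). -/
def cycleWeight {V : Type*} (W : V → V → ℝ) (l : List V) : ℝ :=
  walkWeight W (l ++ l.take 1)

/-- The underlying undirected edge of a dart of the auxiliary graph. -/
def undEdge : (α ⊕ β) × (α ⊕ β) → Option (α × β)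
  | (Sum.inl u, Sum.inr v) => some (u, v)
  | (Sum.inr v, Sum.inl u) => some (u, v)
  | _ => none

/-- The set of underlying edges of `G` used by a walk in the auxiliary graph. -/
def usedEdges [DecidableEq α] [DecidableEq β] (l : List (α ⊕ β)) : Finset (α × β) :=
  ((l.zip l.tail).filterMap undEdge).toFinset

/-- An edge set is a matching if every vertex appears at most once. -/
def IsMatching (μ : Finset (α × β)) : Prop :=
  ∀ e ∈ μ, ∀ f ∈ μ, (e.1 = f.1 ∨ e.2 = f.2) → e = f

/-- A perfect matching: a matching contained in `E` covering every vertex. -/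
def IsPerfectMatching (E μ : Finset (α × β)) : Prop :=
  μ ⊆ E ∧ IsMatching μ ∧ (∀ u : α, ∃ v : β, (u, v) ∈ μ) ∧ (∀ v : β, ∃ u : α, (u, v) ∈ μ)

/-- The weight of a matching. -/
def matchingWeight (w : α × β → ℝ) (μ : Finset (α × β)) : ℝ := ∑ e ∈ μ, w e

/-- A minimum-weight perfect matching. -/
def IsMinPerfectMatching (E : Finset (α × β)) (w : α × β → ℝ) (μ : Finset (α × β)) : Prop :=
  IsPerfectMatching E μ ∧
    ∀ ν : Finset (α × β), IsPerfectMatching E ν → matchingWeight w μ ≤ matchingWeight w ν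

/-- `p` is a potential for `(G_μ, w_μ)`: all reduced weights are nonnegative. -/
def IsPotential (E μ : Finset (α × β)) (w : α × β → ℝ) (p : α ⊕ β → ℝ) : Prop :=
  ∀ x y : α ⊕ β, auxAdj E μ x y → auxW w x y + p x - p y ≥ 0

section Helpers

variable {V : Type*}

lemma walkWeight_nil (W : V → V → ℝ) : walkWeight W [] = 0 := rfl

lemma walkWeight_single (W : V → V → ℝ) (x : V) : walkWeight W [x] = 0 := rfl

lemma walkWeight_cons_cons (W : V → V → ℝ) (x y : V) (l : List V) :
    walkWeight W (x :: y :: l) = W x y + walkWeight W (y :: l) := by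
  simp [walkWeight]

lemma chain'_imp_mem {R S : V → V → Prop} :
    ∀ {l : List V}, l.Chain' R → (∀ x ∈ l, ∀ y ∈ l, R x y → S x y) → l.Chain' S
  | [], _, _ => List.isChain_nil
  | [x], _, _ => List.isChain_singleton x
  | x :: y :: l, h, H => by
    simp only [List.Chain', List.isChain_cons_cons] at h ⊢
    refine ⟨H x (by simp) y (by simp) h.1, chain'_imp_mem h.2 ?_⟩
    intro a ha b hb hr
    exact H a (List.mem_cons_of_mem x ha) b (List.mem_cons_of_mem x hb) hr

variable [DecidableEq α] [DecidableEq β]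

lemma usedEdges_nil : usedEdges ([] : List (α ⊕ β)) = ∅ := rfl

lemma usedEdges_single (x : α ⊕ β) : usedEdges [x] = ∅ := by
  simp [usedEdges]

lemma usedEdges_inl_cons (a : α) (b : β) (l : List (α ⊕ β)) :
    usedEdges (Sum.inl a :: Sum.inr b :: l) = insert (a, b) (usedEdges (Sum.inr b :: l)) := by
  simp [usedEdges, undEdge]

lemma usedEdges_inr_cons (a : α) (b : β) (l : List (α ⊕ β)) :
    usedEdges (Sum.inr b :: Sum.inl a :: l) = insert (a, b) (usedEdges (Sum.inl a :: l)) := by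
  simp [usedEdges, undEdge]

lemma mem_usedEdges {l : List (α ⊕ β)} {e : α × β} (he : e ∈ usedEdges l) :
    Sum.inl e.1 ∈ l ∧ Sum.inr e.2 ∈ l := by
  simp only [usedEdges, List.mem_toFinset, List.mem_filterMap] at he
  obtain ⟨⟨x, y⟩, hxy, hund⟩ := he
  have hx : x ∈ l := (List.of_mem_zip hxy).1
  have hy : y ∈ l := (List.mem_of_mem_tail (List.of_mem_zip hxy).2)
  match x, y, hund with
  | Sum.inl u, Sum.inr v, hund =>
    simp only [undEdge, Option.some.injEq] at hund
    subst hund; exact ⟨hx, hy⟩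
  | Sum.inr v, Sum.inl u, hund =>
    simp only [undEdge, Option.some.injEq] at hund
    subst hund; exact ⟨hy, hx⟩

end Helpers

section Exchange

variable [DecidableEq α] [DecidableEq β]

lemma symm_step {γ : Type*} [DecidableEq γ] {a b : γ} {ρ U : Finset γ}
    (haρ : a ∉ ρ) (hbρ : b ∈ ρ) (haU : a ∉ U) (hbU : b ∉ U) (hab : a ≠ b) :
    symmDiff ρ (insert a (insert b U)) = symmDiff (insert a (ρ.erase b)) U := by
  ext e
  simp only [Finset.mem_symmDiff, Finset.mem_insert, Finset.mem_erase]
  by_cases h1 : e = a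
  · subst h1; simp only [true_or, not_true, false_and, true_and]
    tauto
  by_cases h2 : e = b
  · subst h2
    tauto
  · tauto

lemma exch (E : Finset (α × β)) (tw : α × β → ℝ) :
    ∀ (n : ℕ) (Q : List (α ⊕ β)) (ρ : Finset (α × β)) (s : α) (t : β),
      Q.length = n →
      ρ ⊆ E → IsMatching ρ →
      (∀ b, (s, b) ∉ ρ) → (∀ a, (a, t) ∉ ρ) →
      (∀ a, a ≠ s → ∃ b, (a, b) ∈ ρ) → (∀ b, b ≠ t → ∃ a, (a, b) ∈ ρ) →
      IsDiPath (auxAdj E ρ) (Sum.inl s) (Sum.inr t) Q →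
      IsPerfectMatching E (symmDiff ρ (usedEdges Q)) ∧
        matchingWeight tw (symmDiff ρ (usedEdges Q)) =
          matchingWeight tw ρ + walkWeight (auxW tw) Q := by
  intro n
  induction n using Nat.strong_induction_on with
  | _ n ih =>
  rintro Q ρ s t hlen hρE hmat hs ht hca hcb ⟨hhead, hlast, hchain, hnodup⟩
  rcases Q with _ | ⟨x, Q1⟩
  · simp at hhead
  obtain rfl : x = Sum.inl s := by simpa using hhead
  rcases Q1 with _ | ⟨y, Q2⟩
  · simp at hlast
  have hadj1 : auxAdj E ρ (Sum.inl s) y := (List.isChain_cons_cons.1 hchain).1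
  rcases y with a | v
  · exact absurd hadj1 (by simp [auxAdj])
  obtain ⟨hsvE, hsvρ⟩ := hadj1
  rcases Q2 with _ | ⟨z, Q3⟩
  · -- base case : Q = [inl s, inr v]
    obtain rfl : v = t := by simpa using hlast
    have hused : usedEdges [Sum.inl s, Sum.inr v] = {(s, v)} := by
      rw [usedEdges_inl_cons, usedEdges_single]; rfl
    have hsymm : symmDiff ρ (usedEdges [Sum.inl s, Sum.inr v]) = insert (s, v) ρ := by
      rw [hused]; ext e
      simp only [Finset.mem_symmDiff, Finset.mem_singleton, Finset.mem_insert]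
      constructor
      · rintro (⟨h1, h2⟩ | ⟨h1, h2⟩) <;> tauto
      · rintro (rfl | h1)
        · exact Or.inr ⟨rfl, hsvρ⟩
        · exact Or.inl ⟨h1, fun h => hsvρ (h ▸ h1)⟩
    rw [hsymm]
    refine ⟨⟨Finset.insert_subset hsvE hρE, ?_, ?_, ?_⟩, ?_⟩
    · rintro ⟨e1, e2⟩ he ⟨f1, f2⟩ hf hco
      simp only [Finset.mem_insert, Prod.mk.injEq] at he hf
      rcases he with ⟨rfl, rfl⟩ | he <;> rcases hf with ⟨rfl, rfl⟩ | hf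
      · rfl
      · exfalso; rcases hco with h | h
        · exact hs f2 (by rwa [← (show e1 = f1 from h)] at hf)
        · exact ht f1 (by rwa [← (show e2 = f2 from h)] at hf)
      · exfalso; rcases hco with h | h
        · exact hs e2 (by rwa [(show e1 = f1 from h)] at he)
        · exact ht e1 (by rwa [(show e2 = f2 from h)] at he)
      · exact hmat _ he _ hf hco
    · intro a
      by_cases ha : a = s
      · exact ⟨v, by simp [ha]⟩
      · obtain ⟨b, hb⟩ := hca a ha; exact ⟨b, Finset.mem_insert_of_mem hb⟩
    · intro b
      by_cases hb : b = v
      · exact ⟨s, by simp [hb]⟩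
      · obtain ⟨a, ha⟩ := hcb b hb; exact ⟨a, Finset.mem_insert_of_mem ha⟩
    · rw [matchingWeight, Finset.sum_insert hsvρ, walkWeight_cons_cons, walkWeight_single]
      show tw (s, v) + matchingWeight tw ρ = matchingWeight tw ρ + (tw (s, v) + 0)
      ring
  -- step case : Q = inl s :: inr v :: z :: Q3
  have hadj2 : auxAdj E ρ (Sum.inr v) z :=
    (List.isChain_cons_cons.1 (List.isChain_cons_cons.1 hchain).2).1
  rcases z with u | b
  swap
  · exact absurd hadj2 (by simp [auxAdj])
  have huv : (u, v) ∈ ρ := hadj2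
  have hus : u ≠ s := fun h => hs v (h ▸ huv)
  have hQ3ne : Q3 ≠ [] := by rintro rfl; simp at hlast
  have hlast2 : (Sum.inl u :: Q3).getLast? = some (Sum.inr t) := by
    simpa [List.getLast?_cons_cons] using hlast
  have htmem : Sum.inr t ∈ Sum.inl u :: Q3 := List.mem_of_getLast? hlast2
  have hsln : Sum.inl s ∉ Sum.inl u :: Q3 := by
    have := (List.nodup_cons.1 hnodup).1; simp_all
  have hvn : Sum.inr v ∉ Sum.inl u :: Q3 :=
    (List.nodup_cons.1 (List.nodup_cons.1 hnodup).2).1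
  have hnodup2 : (Sum.inl u :: Q3).Nodup :=
    (List.nodup_cons.1 (List.nodup_cons.1 hnodup).2).2
  have hvt : v ≠ t := by rintro rfl; exact hvn htmem
  set ρ₂ : Finset (α × β) := insert (s, v) (ρ.erase (u, v)) with hρ₂
  have hρ₂E : ρ₂ ⊆ E :=
    Finset.insert_subset hsvE ((Finset.erase_subset _ _).trans hρE)
  have hmat₂ : IsMatching ρ₂ := by
    rintro ⟨e1, e2⟩ he ⟨f1, f2⟩ hf hco
    simp only [hρ₂, Finset.mem_insert, Finset.mem_erase, Prod.mk.injEq] at he hf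
    rcases he with ⟨rfl, rfl⟩ | ⟨hne, he⟩ <;> rcases hf with ⟨rfl, rfl⟩ | ⟨hnf, hf⟩
    · rfl
    · exfalso; rcases hco with h | h
      · exact hs f2 (by rwa [← (show e1 = f1 from h)] at hf)
      · exact hnf (hmat _ hf _ huv (Or.inr (show f2 = e2 from h.symm)))
    · exfalso; rcases hco with h | h
      · exact hs e2 (by rwa [(show e1 = f1 from h)] at he)
      · exact hne (hmat _ he _ huv (Or.inr (show e2 = f2 from h)))
    · exact hmat _ he _ hf hco
  have hs₂ : ∀ b, (u, b) ∉ ρ₂ := by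
    intro b hb
    rcases Finset.mem_insert.1 hb with h | h
    · exact hus (congrArg Prod.fst h)
    · obtain ⟨hne, hρ⟩ := Finset.mem_erase.1 h
      exact hne (hmat _ hρ _ huv (Or.inl rfl))
  have ht₂ : ∀ a, (a, t) ∉ ρ₂ := by
    intro a ha
    rcases Finset.mem_insert.1 ha with h | h
    · exact hvt (congrArg Prod.snd h).symm
    · exact ht a (Finset.mem_erase.1 h).2
  have hca₂ : ∀ a, a ≠ u → ∃ b, (a, b) ∈ ρ₂ := by
    intro a hau
    by_cases has : a = s
    · exact ⟨v, by simp [has, hρ₂]⟩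
    · obtain ⟨b, hb⟩ := hca a has
      exact ⟨b, Finset.mem_insert_of_mem (Finset.mem_erase.2
        ⟨fun h => hau (congrArg Prod.fst h), hb⟩)⟩
  have hcb₂ : ∀ b, b ≠ t → ∃ a, (a, b) ∈ ρ₂ := by
    intro b hbt
    by_cases hbv : b = v
    · exact ⟨s, by simp [hbv, hρ₂]⟩
    · obtain ⟨a, ha⟩ := hcb b hbt
      exact ⟨a, Finset.mem_insert_of_mem (Finset.mem_erase.2
        ⟨fun h => hbv (congrArg Prod.snd h), ha⟩)⟩
  have hchain3 : List.Chain' (auxAdj E ρ) (Sum.inl u :: Q3) :=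
    (List.isChain_cons_cons.1 (List.isChain_cons_cons.1 hchain).2).2
  have hchain₂ : List.Chain' (auxAdj E ρ₂) (Sum.inl u :: Q3) := by
    refine chain'_imp_mem hchain3 ?_
    rintro x hxm y hym hadj
    match x, y, hadj with
    | Sum.inl a, Sum.inr b, ⟨h1, h2⟩ =>
      refine ⟨h1, fun hmem => ?_⟩
      rcases Finset.mem_insert.1 hmem with h | h
      · exact hsln ((show a = s from congrArg Prod.fst h) ▸ hxm)
      · exact h2 (Finset.mem_erase.1 h).2
    | Sum.inr b, Sum.inl a, hadj =>
      refine Finset.mem_insert_of_mem (Finset.mem_erase.2 ⟨fun h => ?_, hadj⟩)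
      exact hvn ((show b = v from congrArg Prod.snd h) ▸ hxm)
  have hlen2 : (Sum.inl u :: Q3).length < n := by
    simp only [List.length_cons] at hlen ⊢; omega
  obtain ⟨hpm₂, hw₂⟩ := ih _ hlen2 (Sum.inl u :: Q3) ρ₂ u t rfl hρ₂E hmat₂ hs₂ ht₂
    hca₂ hcb₂ ⟨rfl, hlast2, hchain₂, hnodup2⟩
  have hsvU : (s, v) ∉ usedEdges (Sum.inl u :: Q3) := fun h => hsln (mem_usedEdges h).1
  have huvU : (u, v) ∉ usedEdges (Sum.inl u :: Q3) := fun h => hvn (mem_usedEdges h).2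
  have husedQ : usedEdges (Sum.inl s :: Sum.inr v :: Sum.inl u :: Q3) =
      insert (s, v) (insert (u, v) (usedEdges (Sum.inl u :: Q3))) := by
    rw [usedEdges_inl_cons, usedEdges_inr_cons]
  have hsymm : symmDiff ρ (usedEdges (Sum.inl s :: Sum.inr v :: Sum.inl u :: Q3)) =
      symmDiff ρ₂ (usedEdges (Sum.inl u :: Q3)) := by
    rw [husedQ, hρ₂]
    exact symm_step hsvρ huv hsvU huvU (fun h => hus (show u = s from (congrArg Prod.fst h).symm))
  rw [hsymm]
  refine ⟨hpm₂, ?_⟩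
  rw [hw₂, walkWeight_cons_cons, walkWeight_cons_cons]
  have hρ₂w : matchingWeight tw ρ₂ = matchingWeight tw ρ + tw (s, v) - tw (u, v) := by
    rw [matchingWeight, hρ₂, Finset.sum_insert (fun h => hsvρ (Finset.mem_erase.1 h).2),
      Finset.sum_erase_eq_sub huv]
    show tw (s, v) + (matchingWeight tw ρ - tw (u, v)) = _
    ring
  rw [hρ₂w]
  show matchingWeight tw ρ + tw (s, v) - tw (u, v) + walkWeight (auxW tw) (Sum.inl u :: Q3) =
    matchingWeight tw ρ + (tw (s, v) + (-tw (u, v) + walkWeight (auxW tw) (Sum.inl u :: Q3)))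
  ring

end Exchange

section Equivs

variable [Fintype α] [Fintype β] [DecidableEq α] [DecidableEq β]

lemma pm_equiv {E ν : Finset (α × β)} (hν : IsPerfectMatching E ν) :
    ∃ e : α ≃ β, ∀ u, (u, e u) ∈ ν := by
  obtain ⟨hsub, hm, hca, hcb⟩ := hν
  choose g hg using hca
  have hinj : Function.Injective g := by
    intro a b hab
    exact congrArg Prod.fst (hm _ (hg a) _ (hg b) (Or.inr hab))
  have hsurj : Function.Surjective g := by
    intro v
    obtain ⟨a, ha⟩ := hcb v
    exact ⟨a, congrArg Prod.snd (hm _ (hg a) _ ha (Or.inl rfl))⟩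
  exact ⟨Equiv.ofBijective g ⟨hinj, hsurj⟩, hg⟩

lemma matching_mem_iff {ν : Finset (α × β)} (hm : IsMatching ν) {e : α ≃ β}
    (he : ∀ u, (u, e u) ∈ ν) (a : α) (b : β) : (a, b) ∈ ν ↔ e a = b := by
  constructor
  · intro hab
    exact (congrArg Prod.snd (hm _ (he a) _ hab (Or.inl rfl)))
  · rintro rfl; exact he a

lemma matching_eq_image {ν : Finset (α × β)} (hm : IsMatching ν) {e : α ≃ β}
    (he : ∀ u, (u, e u) ∈ ν) :
    ν = Finset.univ.image (fun u => (u, e u)) := by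
  ext ⟨a, b⟩
  simp only [Finset.mem_image, Finset.mem_univ, true_and, Prod.mk.injEq]
  rw [matching_mem_iff hm he]
  constructor
  · rintro rfl; exact ⟨a, rfl, rfl⟩
  · rintro ⟨u, rfl, rfl⟩; rfl

lemma weight_graph (w : α × β → ℝ) (f : α → β) :
    matchingWeight w (Finset.univ.image fun u => (u, f u)) = ∑ u, w (u, f u) := by
  rw [matchingWeight, Finset.sum_image]
  intro x _ y _ h
  exact congrArg Prod.fst h

lemma graph_pm (E : Finset (α × β)) (f : α → β) (hf : Function.Bijective f)
    (hE : ∀ u, (u, f u) ∈ E) :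
    IsPerfectMatching E (Finset.univ.image fun u => (u, f u)) := by
  refine ⟨?_, ?_, ?_, ?_⟩
  · intro e he
    simp only [Finset.mem_image, Finset.mem_univ, true_and] at he
    obtain ⟨u, rfl⟩ := he; exact hE u
  · rintro ⟨e1, e2⟩ he ⟨f1, f2⟩ hfm hco
    simp only [Finset.mem_image, Finset.mem_univ, true_and, Prod.mk.injEq] at he hfm
    obtain ⟨u, rfl, rfl⟩ := he
    obtain ⟨u', rfl, rfl⟩ := hfm
    rcases hco with h | h
    · rw [show u = u' from h]
    · rw [show u = u' from hf.1 h]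
  · intro u; exact ⟨f u, Finset.mem_image_of_mem _ (Finset.mem_univ u)⟩
  · intro v
    obtain ⟨u, rfl⟩ := hf.2 v
    exact ⟨u, Finset.mem_image_of_mem _ (Finset.mem_univ u)⟩

end Equivs

section Sums

lemma walkWeight_eq_sum {V : Type*} (W : V → V → ℝ) (l : List V) (d : V) :
    walkWeight W l = ∑ i ∈ Finset.range (l.length - 1), W (l.getD i d) (l.getD (i + 1) d) := by
  induction l with
  | nil => simp [walkWeight_nil]
  | cons x l ih =>
    rcases l with _ | ⟨y, l2⟩
    · simp [walkWeight_single]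
    · rw [walkWeight_cons_cons, ih]
      have hlen : (x :: y :: l2).length - 1 = ((y :: l2).length - 1) + 1 := by
        simp
      rw [hlen, Finset.sum_range_succ']
      simp only [List.getD_cons_succ, List.getD_cons_zero]
      ring

lemma sum_range_two_mul_sub_one (F : ℕ → ℝ) :
    ∀ k : ℕ, ∑ i ∈ Finset.range (2 * k - 1), F i =
      (∑ m ∈ Finset.range k, F (2 * m)) + ∑ m ∈ Finset.range (k - 1), F (2 * m + 1)
  | 0 => by simp
  | 1 => by simp
  | (j + 2) => by
    have ih := sum_range_two_mul_sub_one F (j + 1)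
    have e0 : 2 * (j + 1) - 1 = 2 * j + 1 := by omega
    have e1 : 2 * (j + 2) - 1 = (2 * j + 1 + 1) + 1 := by omega
    have e2 : (j + 2) - 1 = j + 1 := by omega
    rw [e1, Finset.sum_range_succ, Finset.sum_range_succ, e2,
      Finset.sum_range_succ (fun m => F (2 * m)) (j + 1),
      Finset.sum_range_succ (fun m => F (2 * m + 1)) j]
    rw [e0] at ih
    simp only [Nat.add_sub_cancel] at ih
    rw [ih]
    have e3 : 2 * (j + 1) = 2 * j + 1 + 1 := by omega
    have e4 : 2 * j + 1 = 2 * j + 1 := rfl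
    rw [e3]
    ring

end Sums

set_option maxHeartbeats 1000000 in
/-- If `μ` is a minimum-weight perfect matching for `(G, w)`, `s ∈ V⁺` with
`δ_G(s) = {s} × V⁻`, `w̃` agrees with `w` off `δ_G(s)`, `e' = (s,t) ∈ μ`, `μ' = μ \ {e'}`, and
`P` is a shortest directed `s`–`t` path in `(G_{μ'}, w̃_{μ'})`, then `μ' △ P` is a
minimum-weight perfect matching for `(G, w̃)`. -/
theorem exchange_along_shortest_path_is_optimal
    [Fintype α] [Fintype β] [DecidableEq α] [DecidableEq β]
    (E μ : Finset (α × β)) (w tw : α × β → ℝ) (s : α) (t : β) (P : List (α ⊕ β))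
    (hμ : IsMinPerfectMatching E w μ)
    (hs : ∀ v : β, (s, v) ∈ E)
    (htw : ∀ e ∈ E, e.1 ≠ s → tw e = w e)
    (het : (s, t) ∈ μ)
    (hP : IsDiPath (auxAdj E (μ.erase (s, t))) (Sum.inl s) (Sum.inr t) P)
    (hPmin : ∀ Q : List (α ⊕ β), IsDiPath (auxAdj E (μ.erase (s, t))) (Sum.inl s) (Sum.inr t) Q →
      walkWeight (auxW tw) P ≤ walkWeight (auxW tw) Q) :
    IsMinPerfectMatching E tw (symmDiff (μ.erase (s, t)) (usedEdges P)) := by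
  classical
  obtain ⟨hμpm, hμmin⟩ := hμ
  have hμE := hμpm.1
  have hμmatch := hμpm.2.1
  obtain ⟨eμ, heμ⟩ := pm_equiv hμpm
  have hμmem : ∀ a b, (a, b) ∈ μ ↔ eμ a = b := matching_mem_iff hμmatch heμ
  have heμs : eμ s = t := (hμmem s t).1 het
  have hμ'sub : μ.erase (s, t) ⊆ E := (Finset.erase_subset _ _).trans hμE
  have hμ'match : IsMatching (μ.erase (s, t)) := fun e he f hf hco =>
    hμmatch e (Finset.mem_erase.1 he).2 f (Finset.mem_erase.1 hf).2 hco
  have hμ's : ∀ b, (s, b) ∉ μ.erase (s, t) := by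
    intro b hb
    obtain ⟨hne, hbμ⟩ := Finset.mem_erase.1 hb
    have hbt : b = t := ((hμmem s b).1 hbμ).symm.trans heμs
    exact hne (by rw [hbt])
  have hμ't : ∀ a, (a, t) ∉ μ.erase (s, t) := by
    intro a ha
    obtain ⟨hne, haμ⟩ := Finset.mem_erase.1 ha
    have has : a = s := eμ.injective (((hμmem a t).1 haμ).trans heμs.symm)
    exact hne (by rw [has])
  have hμ'ca : ∀ a, a ≠ s → ∃ b, (a, b) ∈ μ.erase (s, t) := fun a ha =>
    ⟨eμ a, Finset.mem_erase.2 ⟨fun h => ha (congrArg Prod.fst h), heμ a⟩⟩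
  have hμ'cb : ∀ b, b ≠ t → ∃ a, (a, b) ∈ μ.erase (s, t) := fun b hb =>
    ⟨eμ.symm b, Finset.mem_erase.2 ⟨fun h => hb (congrArg Prod.snd h),
      by simpa using heμ (eμ.symm b)⟩⟩
  obtain ⟨hPpm, hPw⟩ := exch E tw P.length P (μ.erase (s, t)) s t rfl hμ'sub hμ'match
    hμ's hμ't hμ'ca hμ'cb hP
  refine ⟨hPpm, ?_⟩
  intro ν hν
  obtain ⟨eν, heν⟩ := pm_equiv hν
  have hνmem : ∀ a b, (a, b) ∈ ν ↔ eν a = b := matching_mem_iff hν.2.1 heν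
  set σ : Equiv.Perm α := eν.trans eμ.symm with hσ
  have hσap : ∀ u, eμ (σ u) = eν u := fun u => eμ.apply_symm_apply (eν u)
  have hex : ∃ n, 0 < n ∧ (σ ^ n) s = s :=
    ⟨orderOf σ, orderOf_pos σ, by rw [pow_orderOf_eq_one]; rfl⟩
  set k := Nat.find hex with hkdef
  obtain ⟨hkpos, hσk⟩ : 0 < k ∧ (σ ^ k) s = s := Nat.find_spec hex
  have hkmin : ∀ m, 0 < m → m < k → (σ ^ m) s ≠ s := fun m hm hmk hms =>
    Nat.find_min hex hmk ⟨hm, hms⟩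
  have hps : ∀ (j : ℕ) (x : α), (σ ^ (j + 1)) x = σ ((σ ^ j) x) := by
    intro j x; rw [pow_succ']; rfl
  have hps2 : ∀ (j : ℕ) (x : α), (σ ^ (j + 1)) x = (σ ^ j) (σ x) := by
    intro j x; rw [pow_succ]; rfl
  have hinjOrb : ∀ m, m < k → ∀ m', m' < k → (σ ^ m) s = (σ ^ m') s → m = m' := by
    have key : ∀ m m', m ≤ m' → m' < k → (σ ^ m) s = (σ ^ m') s → m = m' := by
      intro m m' hmm hm'k hEq
      by_contra hne
      have em : m + (m' - m) = m' := by omega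
      have hsplit : (σ ^ m') s = (σ ^ m) ((σ ^ (m' - m)) s) := by
        conv_lhs => rw [← em]
        rw [pow_add]; rfl
      exact hkmin (m' - m) (by omega) (by omega)
        ((Equiv.injective (σ ^ m) (hEq.trans hsplit)).symm)
    intro m hm m' hm' hEq
    rcases le_total m m' with h | h
    · exact key m m' h hm' hEq
    · exact (key m' m h hm hEq.symm).symm
  set O : Finset α := (Finset.range k).image (fun m => (σ ^ m) s) with hO
  have hsO : s ∈ O := Finset.mem_image.2 ⟨0, Finset.mem_range.2 hkpos, by simp⟩
  have hOs : ∀ u ∈ O, σ u ∈ O := by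
    intro u hu
    obtain ⟨m, hm, rfl⟩ := Finset.mem_image.1 hu
    have hmk := Finset.mem_range.1 hm
    have h1 : σ ((σ ^ m) s) = (σ ^ (m + 1)) s := (hps m s).symm
    rw [h1]
    by_cases h : m + 1 < k
    · exact Finset.mem_image.2 ⟨m + 1, Finset.mem_range.2 h, rfl⟩
    · rw [show m + 1 = k from by omega, hσk]; exact hsO
  have hOs' : ∀ u, σ u ∈ O → u ∈ O := by
    intro u hu
    obtain ⟨m, hm, hmu⟩ := Finset.mem_image.1 hu
    have hmk := Finset.mem_range.1 hm
    rcases m with _ | m'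
    · -- σ u = σ^0 s = s = σ^k s = σ (σ^(k-1) s)
      have h1 : σ u = s := by simpa using hmu.symm
      have h2 : σ ((σ ^ (k - 1)) s) = s := by
        rw [← hps (k - 1) s, show k - 1 + 1 = k from by omega, hσk]
      have := σ.injective (h1.trans h2.symm)
      rw [this]
      exact Finset.mem_image.2 ⟨k - 1, Finset.mem_range.2 (by omega), rfl⟩
    · have h1 : σ ((σ ^ m') s) = σ u := by rw [← hps m' s]; exact hmu
      have := σ.injective h1
      rw [← this]
      exact Finset.mem_image.2 ⟨m', Finset.mem_range.2 (by omega), rfl⟩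
  -- the mixed matching h
  set hf : α → β := fun u => if u ∈ O then eμ u else eν u with hhf
  have hinj : Function.Injective hf := by
    intro a b hab
    by_cases ha : a ∈ O <;> by_cases hb : b ∈ O <;>
      simp only [hhf, ha, hb, if_true, if_false] at hab
    · exact eμ.injective hab
    · exfalso
      have h1 : σ b = a := by
        rw [hσ]
        simp only [Equiv.trans_apply]
        rw [← hab]
        exact eμ.symm_apply_apply a
      exact hb (hOs' b (by rw [h1]; exact ha))
    · exfalso
      have h1 : σ a = b := by
        rw [hσ]
        simp only [Equiv.trans_apply]
        rw [hab]
        exact eμ.symm_apply_apply b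
      exact ha (hOs' a (by rw [h1]; exact hb))
    · exact eν.injective hab
  have hbijh : Function.Bijective hf :=
    (Fintype.bijective_iff_injective_and_card hf).2 ⟨hinj, Fintype.card_congr eμ⟩
  have hhE : ∀ u, (u, hf u) ∈ E := by
    intro u
    by_cases hu : u ∈ O
    · simp only [hhf, hu, if_true]; exact hμE (heμ u)
    · simp only [hhf, hu, if_false]; exact hν.1 (heν u)
  have hle := hμmin _ (graph_pm E hf hbijh hhE)
  have hwμ : matchingWeight w μ = ∑ u, w (u, eμ u) := by
    rw [matching_eq_image hμmatch heμ]; exact weight_graph w _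
  have hwh : matchingWeight w (Finset.univ.image fun u => (u, hf u)) = ∑ u, w (u, hf u) :=
    weight_graph w hf
  have keyw : ∑ u ∈ Oᶜ, w (u, eμ u) ≤ ∑ u ∈ Oᶜ, w (u, eν u) := by
    rw [hwμ, hwh] at hle
    rw [← Finset.sum_add_sum_compl O (fun u => w (u, eμ u)),
      ← Finset.sum_add_sum_compl O (fun u => w (u, hf u))] at hle
    have h1 : ∑ u ∈ O, w (u, hf u) = ∑ u ∈ O, w (u, eμ u) :=
      Finset.sum_congr rfl (fun u hu => by simp only [hhf, hu, if_true])
    have h2 : ∑ u ∈ Oᶜ, w (u, hf u) = ∑ u ∈ Oᶜ, w (u, eν u) :=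
      Finset.sum_congr rfl (fun u hu => by
        simp only [hhf, Finset.mem_compl.1 hu, if_false])
    rw [h1, h2] at hle
    linarith
  have hcns : ∀ u ∈ Oᶜ, u ≠ s := fun u hu hus => (Finset.mem_compl.1 hu) (hus ▸ hsO)
  have keytw : ∑ u ∈ Oᶜ, tw (u, eμ u) ≤ ∑ u ∈ Oᶜ, tw (u, eν u) := by
    have h1 : ∑ u ∈ Oᶜ, tw (u, eμ u) = ∑ u ∈ Oᶜ, w (u, eμ u) :=
      Finset.sum_congr rfl (fun u hu => htw _ (hμE (heμ u)) (hcns u hu))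
    have h2 : ∑ u ∈ Oᶜ, tw (u, eν u) = ∑ u ∈ Oᶜ, w (u, eν u) :=
      Finset.sum_congr rfl (fun u hu => htw _ (hν.1 (heν u)) (hcns u hu))
    rw [h1, h2]; exact keyw
  -- the path Q through the orbit of s
  set vert : ℕ → α ⊕ β := fun i =>
    if i % 2 = 0 then Sum.inl ((σ ^ (i / 2)) s) else Sum.inr (eν ((σ ^ (i / 2)) s)) with hvert
  have hvert_even : ∀ m, vert (2 * m) = Sum.inl ((σ ^ m) s) := by
    intro m
    have h1 : 2 * m % 2 = 0 := by omega
    have h2 : 2 * m / 2 = m := by omega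
    simp only [hvert, h1, h2, if_true]
  have hvert_odd : ∀ m, vert (2 * m + 1) = Sum.inr (eν ((σ ^ m) s)) := by
    intro m
    have h1 : ¬((2 * m + 1) % 2 = 0) := by omega
    have h2 : (2 * m + 1) / 2 = m := by omega
    simp only [hvert, h1, h2, if_false]
  have hnofix : ∀ m, m < k → ((σ ^ m) s, eν ((σ ^ m) s)) ∉ μ.erase (s, t) := by
    intro m hm hmem
    obtain ⟨hne, hmemμ⟩ := Finset.mem_erase.1 hmem
    have h1 : eμ ((σ ^ m) s) = eν ((σ ^ m) s) := (hμmem _ _).1 hmemμ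
    have h2 : σ ((σ ^ m) s) = (σ ^ m) s := by
      rw [hσ]
      simp only [Equiv.trans_apply]
      rw [← h1]
      exact eμ.symm_apply_apply _
    have h4 : ∀ j, (σ ^ j) ((σ ^ m) s) = (σ ^ m) s := by
      intro j
      induction j with
      | zero => rfl
      | succ j ihj =>
        have := hps2 j ((σ ^ m) s)
        rw [this, h2, ihj]
    have h5 : (σ ^ (k - m)) ((σ ^ m) s) = s := by
      have em : m + (k - m) = k := by omega
      rw [← Equiv.Perm.mul_apply, ← pow_add, show k - m + m = k from by omega, hσk]
    have h6 : (σ ^ m) s = s := (h4 (k - m)).symm.trans h5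
    have h7 : eν ((σ ^ m) s) = t := by
      rw [h6] at h2
      rw [h6, ← hσap s, h2, heμs]
    exact hne (by rw [h7, h6])
  have hedge1 : ∀ m, m < k →
      auxAdj E (μ.erase (s, t)) (Sum.inl ((σ ^ m) s)) (Sum.inr (eν ((σ ^ m) s))) :=
    fun m hm => ⟨hν.1 (heν _), hnofix m hm⟩
  have heqnext : ∀ m, eμ ((σ ^ (m + 1)) s) = eν ((σ ^ m) s) := by
    intro m; rw [hps m s]; exact hσap _
  have hedge2 : ∀ m, m + 1 < k →
      auxAdj E (μ.erase (s, t)) (Sum.inr (eν ((σ ^ m) s))) (Sum.inl ((σ ^ (m + 1)) s)) := by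
    intro m hm
    show ((σ ^ (m + 1)) s, eν ((σ ^ m) s)) ∈ μ.erase (s, t)
    refine Finset.mem_erase.2 ⟨fun hc => ?_, by rw [← heqnext m]; exact heμ _⟩
    exact hkmin (m + 1) (by omega) hm (congrArg Prod.fst hc)
  set Q : List (α ⊕ β) := List.ofFn (fun j : Fin (2 * k) => vert j.1) with hQdef
  have hQlen : Q.length = 2 * k := by rw [hQdef, List.length_ofFn]
  have h0val : vert 0 = Sum.inl s := by
    have := hvert_even 0
    simpa using this
  have hQhead : Q.head? = some (Sum.inl s) := by
    rw [hQdef, List.head?_eq_getElem?, List.getElem?_ofFn]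
    simp only [List.ofFnNthVal]
    rw [dif_pos (show 0 < 2 * k by omega)]
    exact congrArg some h0val
  have hlastv : eν ((σ ^ (k - 1)) s) = t := by
    have h1 := heqnext (k - 1)
    rw [show k - 1 + 1 = k from by omega, hσk, heμs] at h1
    exact h1.symm
  have hQlast : Q.getLast? = some (Sum.inr t) := by
    rw [hQdef, List.getLast?_eq_getElem?, List.getElem?_ofFn]
    rw [List.length_ofFn]
    simp only [List.ofFnNthVal]
    rw [dif_pos (show 2 * k - 1 < 2 * k by omega)]
    have hv : vert (2 * k - 1) = Sum.inr t := by
      rw [show 2 * k - 1 = 2 * (k - 1) + 1 from by omega, hvert_odd (k - 1), hlastv]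
    exact congrArg some hv
  have hQchain : List.Chain' (auxAdj E (μ.erase (s, t))) Q := by
    rw [hQdef]
    show List.IsChain _ _
    rw [List.isChain_iff_getElem]
    intro i hi
    rw [List.length_ofFn] at hi
    rw [List.getElem_ofFn, List.getElem_ofFn]
    show auxAdj E (μ.erase (s, t)) (vert i) (vert (i + 1))
    rcases Nat.even_or_odd i with ⟨m, hm⟩ | ⟨m, hm⟩
    · rw [show i + 1 = 2 * m + 1 from by omega, show i = 2 * m from by omega,
        hvert_even m, hvert_odd m]
      exact hedge1 m (by omega)
    · rw [show i + 1 = 2 * (m + 1) from by omega, show i = 2 * m + 1 from by omega,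
        hvert_odd m, hvert_even (m + 1)]
      exact hedge2 m (by omega)
  have hQnodup : Q.Nodup := by
    rw [hQdef, List.nodup_ofFn]
    rintro ⟨i, hik⟩ ⟨i', hik'⟩ hjj
    simp only at hjj
    simp only [Fin.mk.injEq]
    rcases Nat.even_or_odd i with ⟨m, hm⟩ | ⟨m, hm⟩ <;>
      rcases Nat.even_or_odd i' with ⟨m', hm'⟩ | ⟨m', hm'⟩
    · rw [show i = 2 * m from by omega, show i' = 2 * m' from by omega,
        hvert_even m, hvert_even m'] at hjj
      have := hinjOrb m (by omega) m' (by omega) (Sum.inl.inj hjj)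
      omega
    · rw [show i = 2 * m from by omega, show i' = 2 * m' + 1 from by omega,
        hvert_even m, hvert_odd m'] at hjj
      exact absurd hjj (by simp)
    · rw [show i = 2 * m + 1 from by omega, show i' = 2 * m' from by omega,
        hvert_odd m, hvert_even m'] at hjj
      exact absurd hjj (by simp)
    · rw [show i = 2 * m + 1 from by omega, show i' = 2 * m' + 1 from by omega,
        hvert_odd m, hvert_odd m'] at hjj
      have h1 := eν.injective (Sum.inr.inj hjj)
      have := hinjOrb m (by omega) m' (by omega) h1
      omega
  have hPQ := hPmin Q ⟨hQhead, hQlast, hQchain, hQnodup⟩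
  -- weight of Q
  have hQw : walkWeight (auxW tw) Q =
      (∑ m ∈ Finset.range k, tw ((σ ^ m) s, eν ((σ ^ m) s))) -
        ∑ m ∈ Finset.range (k - 1), tw ((σ ^ (m + 1)) s, eμ ((σ ^ (m + 1)) s)) := by
    rw [hQdef, walkWeight_eq_sum _ _ (Sum.inl s), List.length_ofFn]
    have hgetD : ∀ i, i < 2 * k →
        (List.ofFn fun j : Fin (2 * k) => vert j.1).getD i (Sum.inl s) = vert i := by
      intro i hi
      rw [List.getD_eq_getElem _ _ (by rw [List.length_ofFn]; exact hi)]
      rw [List.getElem_ofFn]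
    have hsum1 : ∑ i ∈ Finset.range (2 * k - 1),
        auxW tw ((List.ofFn fun j : Fin (2 * k) => vert j.1).getD i (Sum.inl s))
          ((List.ofFn fun j : Fin (2 * k) => vert j.1).getD (i + 1) (Sum.inl s)) =
        ∑ i ∈ Finset.range (2 * k - 1), auxW tw (vert i) (vert (i + 1)) := by
      refine Finset.sum_congr rfl (fun i hi => ?_)
      have hik := Finset.mem_range.1 hi
      rw [hgetD i (by omega), hgetD (i + 1) (by omega)]
    rw [hsum1, sum_range_two_mul_sub_one (fun i => auxW tw (vert i) (vert (i + 1))) k]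
    have hA : ∑ m ∈ Finset.range k, auxW tw (vert (2 * m)) (vert (2 * m + 1)) =
        ∑ m ∈ Finset.range k, tw ((σ ^ m) s, eν ((σ ^ m) s)) := by
      refine Finset.sum_congr rfl (fun m hm => ?_)
      rw [hvert_even m, hvert_odd m]; rfl
    have hB : ∑ m ∈ Finset.range (k - 1), auxW tw (vert (2 * m + 1)) (vert (2 * m + 1 + 1)) =
        ∑ m ∈ Finset.range (k - 1), -tw ((σ ^ (m + 1)) s, eμ ((σ ^ (m + 1)) s)) := by
      refine Finset.sum_congr rfl (fun m hm => ?_)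
      rw [show 2 * m + 1 + 1 = 2 * (m + 1) from by omega, hvert_odd m, hvert_even (m + 1)]
      show -tw ((σ ^ (m + 1)) s, eν ((σ ^ m) s)) = _
      rw [← heqnext m]
    rw [hA, hB, Finset.sum_neg_distrib]
    ring
  have hOsum1 : ∑ u ∈ O, tw (u, eν u) = ∑ m ∈ Finset.range k, tw ((σ ^ m) s, eν ((σ ^ m) s)) := by
    rw [hO]
    exact Finset.sum_image (fun x hx y hy hxy =>
      hinjOrb x (Finset.mem_range.1 hx) y (Finset.mem_range.1 hy) hxy)
  have hOerase : O.erase s = (Finset.range (k - 1)).image (fun m => (σ ^ (m + 1)) s) := by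
    ext u
    simp only [Finset.mem_erase, hO, Finset.mem_image, Finset.mem_range]
    constructor
    · rintro ⟨hus, m, hm, rfl⟩
      have hm0 : m ≠ 0 := by rintro rfl; exact hus (by simp)
      exact ⟨m - 1, by omega, by rw [show m - 1 + 1 = m from by omega]⟩
    · rintro ⟨m, hm, rfl⟩
      exact ⟨hkmin (m + 1) (by omega) (by omega), m + 1, by omega, rfl⟩
  have hOsum2 : ∑ u ∈ O.erase s, tw (u, eμ u) =
      ∑ m ∈ Finset.range (k - 1), tw ((σ ^ (m + 1)) s, eμ ((σ ^ (m + 1)) s)) := by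
    rw [hOerase]
    exact Finset.sum_image (fun x hx y hy hxy => by
      have := hinjOrb (x + 1) (by have := Finset.mem_range.1 hx; omega)
        (y + 1) (by have := Finset.mem_range.1 hy; omega) hxy
      omega)
  have hμ'im : μ.erase (s, t) = (Finset.univ.erase s).image (fun u => (u, eμ u)) := by
    ext ⟨a, b⟩
    constructor
    · intro he
      obtain ⟨hne, habμ⟩ := Finset.mem_erase.1 he
      have hb : eμ a = b := (hμmem a b).1 habμ
      refine Finset.mem_image.2 ⟨a, Finset.mem_erase.2 ⟨?_, Finset.mem_univ _⟩, by rw [hb]⟩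
      rintro rfl
      have hbt : b = t := hb.symm.trans heμs
      exact hne (by rw [hbt])
    · intro he
      obtain ⟨u, hu, huv⟩ := Finset.mem_image.1 he
      obtain ⟨hus, -⟩ := Finset.mem_erase.1 hu
      refine Finset.mem_erase.2 ⟨?_, by rw [← huv]; exact heμ u⟩
      intro hc
      apply hus
      exact (show u = a from congrArg Prod.fst huv).trans (show a = s from congrArg Prod.fst hc)
  have hwμ' : matchingWeight tw (μ.erase (s, t)) = ∑ u ∈ Finset.univ.erase s, tw (u, eμ u) := by
    rw [hμ'im, matchingWeight, Finset.sum_image (fun x _ y _ h => congrArg Prod.fst h)]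
  have hsetsplit : Finset.univ.erase s = (O.erase s) ∪ Oᶜ := by
    ext u
    simp only [Finset.mem_erase, Finset.mem_univ, and_true, Finset.mem_union, Finset.mem_compl]
    constructor
    · intro hu
      by_cases hO : u ∈ O
      · exact Or.inl ⟨hu, hO⟩
      · exact Or.inr hO
    · rintro (⟨hu, _⟩ | hu)
      · exact hu
      · rintro rfl; exact hu hsO
  have hdisj : Disjoint (O.erase s) Oᶜ := by
    rw [Finset.disjoint_left]
    intro u hu hc
    exact (Finset.mem_compl.1 hc) (Finset.mem_of_mem_erase hu)
  have hE1 : matchingWeight tw (μ.erase (s, t)) =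
      ∑ u ∈ O.erase s, tw (u, eμ u) + ∑ u ∈ Oᶜ, tw (u, eμ u) := by
    rw [hwμ', hsetsplit, Finset.sum_union hdisj]
  have hE2 : walkWeight (auxW tw) Q =
      ∑ u ∈ O, tw (u, eν u) - ∑ u ∈ O.erase s, tw (u, eμ u) := by
    rw [hQw, hOsum1, hOsum2]
  have hE3 : matchingWeight tw ν = ∑ u ∈ O, tw (u, eν u) + ∑ u ∈ Oᶜ, tw (u, eν u) := by
    have h1 : matchingWeight tw ν = ∑ u, tw (u, eν u) := by
      rw [matching_eq_image hν.2.1 heν]; exact weight_graph tw _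
    rw [h1, ← Finset.sum_add_sum_compl O (fun u => tw (u, eν u))]
  linarith [hPw, hPQ, hE1, hE2, hE3, keytw]
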